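/- Let n' be a positive integer and k ≥ 2 an integer with gcd(k, n') = 1, and let g_1 be the smallest positive integer b with k^b ≡ 1 (mod n'). If g_1 ≥ 2 and q_1 is the smallest prime divisor of g_1, then υ_{k,n'} < 2 n'^{−1} k^{g_1/q_1}. -/

import Mathlib

/-- The order `g_x` of `x ∈ Z_{n'}`: the smallest positive integer `b` such that
`x k^b ≡ x (mod n')`. -/
noncomputable def ordOf (n' k : ℕ) (x : ZMod n') : ℕ :=
  sInf {b : ℕ | 0 < b ∧ x * (k : ZMod n') ^ b = x}

/-- `υ_{k,n'}`: the proportion of elements of `Z_{n'}` whose order is strictly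
less than `g_1`, the order of `1`. -/
noncomputable def upsilon (n' k : ℕ) : ℝ :=
  ({x : ZMod n' | ordOf n' k x < ordOf n' k 1}.ncard : ℝ) / n'

lemma sum_bound (k : ℕ) (hk : 2 ≤ k) (m : ℕ) :
    ∑ d ∈ Finset.Icc 1 m, (k ^ d - 1) < 2 * k ^ m := by
  induction m with
  | zero => simp
  | succ m ih =>
    rw [Finset.sum_Icc_succ_top (by omega)]
    have h1 : 1 ≤ k ^ (m+1) := Nat.one_le_pow _ _ (by omega)
    have h2 : 2 * k ^ m ≤ k ^ (m+1) := by
      rw [pow_succ]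
      calc 2 * k ^ m = k ^ m * 2 := by ring
        _ ≤ k ^ m * k := Nat.mul_le_mul_left _ hk
    omega

lemma card_mul_zero (n c : ℕ) [NeZero n] (hc : 0 < c) :
    (Finset.univ.filter (fun x : ZMod n => x * (c : ZMod n) = 0)).card ≤ c := by
  have hn : 0 < n := Nat.pos_of_ne_zero (NeZero.ne n)
  have key : ∀ x : ZMod n, x * (c : ZMod n) = 0 → n ∣ x.val * c := by
    intro x hx
    have : ((x.val * c : ℕ) : ZMod n) = 0 := by
      push_cast
      rw [ZMod.natCast_val, ZMod.cast_id]
      exact hx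
    exact (ZMod.natCast_eq_zero_iff _ _).mp this
  have := Finset.card_le_card_of_injOn (fun x : ZMod n => x.val * c / n)
    (s := Finset.univ.filter (fun x : ZMod n => x * (c : ZMod n) = 0))
    (t := Finset.range c) ?_ ?_
  · simpa using this
  · intro x hx
    simp only [Finset.coe_filter, Set.mem_setOf_eq, Finset.mem_filter, Finset.mem_univ, true_and] at hx
    have hlt : x.val * c < n * c :=
      Nat.mul_lt_mul_of_lt_of_le (ZMod.val_lt x) le_rfl hc
    rw [Finset.mem_coe, Finset.mem_range]
    exact Nat.div_lt_of_lt_mul hlt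
  · intro x hx y hy hxy
    simp only [Finset.coe_filter, Set.mem_setOf_eq, Finset.mem_univ, true_and] at hx hy
    have hdx := key x hx
    have hdy := key y hy
    simp only at hxy
    have hx' : x.val * c = n * (x.val * c / n) := (Nat.mul_div_cancel' hdx).symm
    have hy' : y.val * c = n * (y.val * c / n) := (Nat.mul_div_cancel' hdy).symm
    have : x.val * c = y.val * c := by rw [hx', hy', hxy]
    exact ZMod.val_injective n (Nat.eq_of_mul_eq_mul_right hc this)

/-- If `g_1 ≥ 2` and `q_1` is the smallest prime divisor of `g_1`, then
`υ_{k,n'} < 2 n'⁻¹ k^{g_1/q_1}`. -/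
theorem stmt11 (n' k : ℕ) (hn' : 0 < n') (hk : 2 ≤ k) (hcop : Nat.Coprime k n')
    (g₁ : ℕ) (hg₁ : g₁ = ordOf n' k 1) (hg₁2 : 2 ≤ g₁) :
    upsilon n' k < 2 * (n' : ℝ)⁻¹ * (k : ℝ) ^ (g₁ / g₁.minFac) := by
  haveI : NeZero n' := ⟨hn'.ne'⟩
  set m := g₁ / g₁.minFac with hm
  have hφ : 0 < n'.totient := Nat.totient_pos.mpr hn'
  have hkt : (k : ZMod n') ^ n'.totient = 1 := by
    have h := Nat.ModEq.pow_totient hcop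
    have := (ZMod.natCast_eq_natCast_iff _ _ _).mpr h
    push_cast at this
    exact this
  have hg₁mem : 0 < g₁ ∧ (1 : ZMod n') * (k : ZMod n') ^ g₁ = 1 := by
    have hne : {b : ℕ | 0 < b ∧ (1 : ZMod n') * (k : ZMod n') ^ b = 1}.Nonempty :=
      ⟨n'.totient, hφ, by rw [one_mul]; exact hkt⟩
    have h := Nat.sInf_mem hne
    rw [hg₁, ordOf]
    exact ⟨h.1, h.2⟩
  have hkg₁ : (k : ZMod n') ^ g₁ = 1 := by rw [← one_mul ((k:ZMod n')^g₁)]; exact hg₁mem.2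
  have key : ∀ x : ZMod n', ordOf n' k x < g₁ →
      ∃ d, 0 < d ∧ d ∣ g₁ ∧ d < g₁ ∧ x * (k : ZMod n') ^ d = x := by
    intro x hx
    set S := {b : ℕ | 0 < b ∧ x * (k : ZMod n') ^ b = x} with hS
    have hg₁S : g₁ ∈ S := ⟨hg₁mem.1, by rw [hkg₁, mul_one]⟩
    have hdmem : ordOf n' k x ∈ S := Nat.sInf_mem ⟨g₁, hg₁S⟩
    set d := ordOf n' k x with hd
    refine ⟨d, hdmem.1, ?_, hx, hdmem.2⟩
    have hstep : ∀ q, x * (k : ZMod n') ^ (q * d) = x := by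
      intro q
      induction q with
      | zero => simp
      | succ q ih =>
        rw [Nat.succ_mul, pow_add, ← mul_assoc, ih]
        exact hdmem.2
    have hr : x * (k : ZMod n') ^ (g₁ % d) = x := by
      have h1 : g₁ = d * (g₁ / d) + g₁ % d := (Nat.div_add_mod g₁ d).symm
      have h2 : x * (k : ZMod n') ^ g₁ = x := hg₁S.2
      rw [h1, mul_comm d (g₁ / d), pow_add, ← mul_assoc, hstep] at h2
      exact h2
    by_contra hndvd
    have hrpos : 0 < g₁ % d := Nat.pos_of_ne_zero (fun h => hndvd (Nat.dvd_of_mod_eq_zero h))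
    have : d ≤ g₁ % d := Nat.sInf_le ⟨hrpos, hr⟩
    have : g₁ % d < d := Nat.mod_lt _ hdmem.1
    omega
  -- proper divisors are ≤ m
  have hdm : ∀ d, 0 < d → d ∣ g₁ → d < g₁ → d ≤ m := by
    intro d hd hdvd hlt
    have he : (g₁ / d) ∣ g₁ := Nat.div_dvd_of_dvd hdvd
    have he2 : 2 ≤ g₁ / d := by
      by_contra h
      push_neg at h
      have hq : g₁ / d * d = g₁ := Nat.div_mul_cancel hdvd
      have h01 : g₁ / d = 0 ∨ g₁ / d = 1 := by
        rcases Nat.lt_succ_iff_lt_or_eq.mp h with h' | h'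
        · left; exact Nat.lt_one_iff.mp h'
        · right; exact h'
      rcases h01 with h0 | h1
      · rw [h0, zero_mul] at hq; omega
      · rw [h1, one_mul] at hq; omega
    have hmf : g₁.minFac ≤ g₁ / d := Nat.minFac_le_of_dvd he2 he
    have hmfpos : 0 < g₁.minFac := Nat.minFac_pos g₁
    rw [hm, Nat.le_div_iff_mul_le hmfpos]
    calc d * g₁.minFac ≤ d * (g₁ / d) := Nat.mul_le_mul_left _ hmf
      _ = g₁ := Nat.mul_div_cancel' hdvd
  -- bad set as finset
  set B := Finset.univ.filter (fun x : ZMod n' => ordOf n' k x < g₁) with hB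
  have hBsub : B ⊆ (Finset.Icc 1 m).biUnion
      (fun d => Finset.univ.filter (fun x : ZMod n' => x * ((k ^ d - 1 : ℕ) : ZMod n') = 0)) := by
    intro x hx
    simp only [hB, Finset.mem_filter, Finset.mem_univ, true_and] at hx
    obtain ⟨d, hd, hdvd, hlt, heq⟩ := key x hx
    rw [Finset.mem_biUnion]
    refine ⟨d, Finset.mem_Icc.mpr ⟨hd, hdm d hd hdvd hlt⟩, ?_⟩
    simp only [Finset.mem_filter, Finset.mem_univ, true_and]
    have hk1 : 1 ≤ k ^ d := Nat.one_le_pow _ _ (by omega)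
    have hcast : ((k ^ d - 1 : ℕ) : ZMod n') = (k : ZMod n') ^ d - 1 := by
      push_cast [hk1]
      ring
    rw [hcast, mul_sub, mul_one, sub_eq_zero, heq]
  have hcard : B.card < 2 * k ^ m := by
    calc B.card ≤ ∑ d ∈ Finset.Icc 1 m,
          (Finset.univ.filter (fun x : ZMod n' => x * ((k ^ d - 1 : ℕ) : ZMod n') = 0)).card :=
        le_trans (Finset.card_le_card hBsub) (Finset.card_biUnion_le)
      _ ≤ ∑ d ∈ Finset.Icc 1 m, (k ^ d - 1) := by
          apply Finset.sum_le_sum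
          intro d hd
          rw [Finset.mem_Icc] at hd
          exact card_mul_zero n' (k ^ d - 1)
            (by have h1 : k ≤ k ^ d := by
                  calc k = k ^ 1 := (pow_one k).symm
                    _ ≤ k ^ d := Nat.pow_le_pow_right (by omega) hd.1
                omega)
      _ < 2 * k ^ m := sum_bound k hk m
  -- transfer to reals
  have hset : {x : ZMod n' | ordOf n' k x < ordOf n' k 1} = ↑B := by
    ext x
    simp [hB, ← hg₁]
  rw [upsilon, hset, Set.ncard_coe_finset]
  have hn'R : (0:ℝ) < (n' : ℝ) := by exact_mod_cast hn'
  have hlt : (B.card : ℝ) < 2 * (k:ℝ) ^ m := by exact_mod_cast hcard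
  calc (B.card : ℝ) / n' < (2 * (k:ℝ) ^ m) / n' := by
        exact div_lt_div_of_pos_right hlt hn'R
    _ = 2 * (n' : ℝ)⁻¹ * (k : ℝ) ^ m := by ring
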